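/- Every symmetric matrix A over GF(2) admits an LDL decomposition: there exist a permutation matrix P, a unit lower-triangular matrix L, and a block-diagonal matrix D whose diagonal blocks are 0, 1, or the 2x2 antidiagonal matrix [[0,1],[1,0]], all over GF(2), such that A = P L D Lᵀ Pᵀ. -/

import Mathlib

open Matrix

private lemma gf2_ne_zero (x : ZMod 2) (h : x ≠ 0) : x = 1 := by revert h; revert x; decide

private lemma gf2_addcancel (x y : ZMod 2) : x = x + y + y := by revert x y; decide

private lemma gf2_perm_conj (n : ℕ) (σ : Equiv.Perm (Fin n)) (X : Matrix (Fin n) (Fin n) (ZMod 2)) :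
    σ.permMatrix (ZMod 2) * X * (σ.permMatrix (ZMod 2))ᵀ = X.submatrix σ σ := by
  have ht : (σ.permMatrix (ZMod 2))ᵀ = (σ⁻¹).permMatrix (ZMod 2) := by
    ext i j
    simp only [transpose_apply, Equiv.Perm.permMatrix, PEquiv.toMatrix_apply,
      Equiv.toPEquiv_apply, Option.mem_def, Option.some.injEq]
    congr 1
    simp only [eq_iff_iff]
    constructor
    · rintro rfl; simp
    · rintro rfl; simp
  rw [ht, show σ.permMatrix (ZMod 2) = σ.toPEquiv.toMatrix from rfl,
    show (σ⁻¹).permMatrix (ZMod 2) = (σ⁻¹).toPEquiv.toMatrix from rfl,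
    PEquiv.mul_toMatrix_toPEquiv, PEquiv.toMatrix_toPEquiv_mul]
  ext i j
  simp [show (σ⁻¹).symm = σ from rfl]

private lemma fin2cases {m : ℕ} {P : Fin (m+2) → Prop} (h0 : P 0) (h1 : P (Fin.succ 0))
    (hs : ∀ i : Fin m, P i.succ.succ) (i : Fin (m+2)) : P i := by
  refine Fin.cases h0 (fun i' => ?_) i
  exact Fin.cases h1 (fun i'' => hs i'') i'

private lemma gf2_key : ∀ (n : ℕ) (A : Matrix (Fin n) (Fin n) (ZMod 2)), A.IsSymm →
    ∃ (τ : Equiv.Perm (Fin n)) (L D : Matrix (Fin n) (Fin n) (ZMod 2)),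
      (∀ i, L i i = 1) ∧ (∀ i j, i < j → L i j = 0) ∧
      (∀ i j : Fin n, i ≠ j → D i j ≠ 0 → ((i : ℕ) + 1 = j ∨ (j : ℕ) + 1 = i)) ∧
      (∀ i j : Fin n, D i j = D j i) ∧
      (∀ i j : Fin n, (i : ℕ) + 1 = j → D i j = 1 → D i i = 0 ∧ D j j = 0) ∧
      (∀ i j l : Fin n, (i : ℕ) + 1 = j → (j : ℕ) + 1 = l → D i j = 1 → D j l = 0) ∧
      A.submatrix τ τ = L * D * Lᵀ := by
  intro n
  induction n using Nat.strong_induction_on with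
  | _ n IH =>
  intro A hA
  have hsym : ∀ a b, A a b = A b a := fun a b => congrFun (congrFun hA b) a
  by_cases h0 : ∀ i j, A i j = 0
  · refine ⟨1, 1, 0, fun i => Matrix.one_apply_eq i,
      fun i j hij => Matrix.one_apply_ne (ne_of_lt hij), ?_, ?_, ?_, ?_, ?_⟩
    · intro i j _ h; exact absurd rfl h
    · intro i j; rfl
    · intro i j _ h; exact absurd h.symm (by simp)
    · intro i j l _ _ h; exact absurd h.symm (by simp)
    · ext a b; simp [h0]
  push_neg at h0
  obtain ⟨i0, j0, hne0⟩ := h0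
  by_cases hd : ∃ k, A k k ≠ 0
  · -- Case 1: a nonzero diagonal entry
    obtain ⟨k, hk⟩ := hd
    have hn : 0 < n := k.pos
    obtain ⟨m, rfl⟩ : ∃ m, n = m + 1 := ⟨n - 1, by omega⟩
    have hk1 : A k k = 1 := gf2_ne_zero _ hk
    set τ₀ : Equiv.Perm (Fin (m+1)) := Equiv.swap 0 k with hτ₀
    set B : Matrix (Fin (m+1)) (Fin (m+1)) (ZMod 2) := A.submatrix τ₀ τ₀ with hBdef
    have hBsym : ∀ a b, B a b = B b a := fun a b => hsym _ _
    have hB00 : B 0 0 = 1 := by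
      simp [hBdef, hτ₀, Equiv.swap_apply_left, hk1]
    set w : Fin m → ZMod 2 := fun i => B i.succ 0 with hw
    set C : Matrix (Fin m) (Fin m) (ZMod 2) := fun i j => B i.succ j.succ + w i * w j with hC
    have hCsym : C.IsSymm := by
      ext i j
      show C j i = C i j
      simp only [hC]
      rw [hBsym, mul_comm]
    obtain ⟨τ', L', D', hL1, hL2, hD1, hD2, hD3, hD4, hmain⟩ := IH m (by omega) C hCsym
    have hCab : ∀ a b, (L' * D' * L'ᵀ) a b = C (τ' a) (τ' b) :=
      fun a b => (congrFun (congrFun hmain a) b).symm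
    set τ₁ : Equiv.Perm (Fin (m+1)) := Equiv.Perm.decomposeFin.symm (0, τ') with hτ₁
    have hτ₁0 : τ₁ 0 = 0 := Equiv.Perm.decomposeFin_symm_apply_zero 0 τ'
    have hτ₁s : ∀ i, τ₁ i.succ = (τ' i).succ := by
      intro i
      simp [hτ₁, Equiv.Perm.decomposeFin_symm_apply_succ]
    set L : Matrix (Fin (m+1)) (Fin (m+1)) (ZMod 2) :=
      Fin.cons (Fin.cons 1 (fun _ => 0)) (fun i => Fin.cons (w (τ' i)) (L' i)) with hL
    set D : Matrix (Fin (m+1)) (Fin (m+1)) (ZMod 2) :=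
      Fin.cons (Fin.cons 1 (fun _ => 0)) (fun i => Fin.cons 0 (D' i)) with hD
    refine ⟨τ₁.trans τ₀, L, D, ?_, ?_, ?_, ?_, ?_, ?_, ?_⟩
    · -- L diagonal
      intro i
      refine Fin.cases ?_ (fun i' => ?_) i <;> simp [hL, hL1]
    · -- L lower triangular
      intro i j
      refine Fin.cases ?_ (fun i' => ?_) i <;> refine Fin.cases ?_ (fun j' => ?_) j <;>
        intro hij
      · exact absurd hij (lt_irrefl _)
      · simp [hL]
      · exact absurd hij (by simp)
      · simpa [hL] using hL2 i' j' (by simpa [Fin.succ_lt_succ_iff] using hij)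
    · -- D adjacency
      intro i j
      refine Fin.cases ?_ (fun i' => ?_) i <;> refine Fin.cases ?_ (fun j' => ?_) j <;>
        intro hne hnz
      · exact absurd rfl hne
      · exact absurd (by simp [hD]) hnz
      · exact absurd (by simp [hD]) hnz
      · have := hD1 i' j' (fun h => hne (by rw [h])) (by simpa [hD] using hnz)
        simp only [Fin.val_succ]
        omega
    · -- D symmetric
      intro i j
      refine Fin.cases ?_ (fun i' => ?_) i <;> refine Fin.cases ?_ (fun j' => ?_) j <;>
        simp [hD, hD2]
    · -- 2x2 blocks antidiagonal
      intro i j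
      refine Fin.cases ?_ (fun i' => ?_) i <;> refine Fin.cases ?_ (fun j' => ?_) j <;>
        intro hadj hone
      · exact absurd hadj (by simp)
      · exact absurd hone (by simp [hD])
      · exact absurd hadj (by simp)
      · have := hD3 i' j' (by simpa using hadj) (by simpa [hD] using hone)
        simp [hD, this.1, this.2]
    · -- blocks don't overlap
      intro i j l
      refine Fin.cases ?_ (fun i' => ?_) i <;> refine Fin.cases ?_ (fun j' => ?_) j <;>
        refine Fin.cases ?_ (fun l' => ?_) l <;> intro h1 h2 h3 <;>
        simp only [Fin.val_succ, Fin.val_zero] at h1 h2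
      all_goals try omega
      · exact absurd h3 (by simp [hD])
      · simpa [hD] using hD4 i' j' l' (by omega) (by omega) (by simpa [hD] using h3)
    · -- the product identity
      ext a b
      show B (τ₁ a) (τ₁ b) = (L * D * Lᵀ) a b
      refine Fin.cases ?_ (fun a' => ?_) a <;> refine Fin.cases ?_ (fun b' => ?_) b
      · rw [hτ₁0, hB00]
        simp only [Matrix.mul_apply, transpose_apply]; simp [Fin.sum_univ_succ, hL, hD]
      · rw [hτ₁0, hτ₁s, hBsym]
        simp only [Matrix.mul_apply, transpose_apply]; simp [Fin.sum_univ_succ, hL, hD, hw]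
      · rw [hτ₁s, hτ₁0]
        simp only [Matrix.mul_apply, transpose_apply]; simp [Fin.sum_univ_succ, hL, hD, hw]
      · rw [hτ₁s, hτ₁s,
          show B (τ' a').succ (τ' b').succ
              = (L' * D' * L'ᵀ) a' b' + w (τ' a') * w (τ' b') from by
            rw [hCab]; simp only [hC]; exact gf2_addcancel _ _]
        simp only [Matrix.mul_apply, transpose_apply]; simp [Fin.sum_univ_succ, hL, hD, Finset.sum_mul]
        ring
  · -- Case 2: zero diagonal
    push_neg at hd
    have hij0 : i0 ≠ j0 := by rintro rfl; exact hne0 (hd i0)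
    have h2n : 2 ≤ n := by
      have h1 := i0.isLt; have h2 := j0.isLt
      have h3 : (i0 : ℕ) ≠ (j0 : ℕ) := fun h => hij0 (Fin.ext h)
      omega
    obtain ⟨m, rfl⟩ : ∃ m, n = m + 2 := ⟨n - 2, by omega⟩
    have hA01 : A i0 j0 = 1 := gf2_ne_zero _ hne0
    set j1 : Fin (m+2) := Equiv.swap 0 i0 j0 with hj1
    have hj1ne : j1 ≠ 0 := fun h =>
      hij0 ((Equiv.swap 0 i0).injective (h.trans (Equiv.swap_apply_right 0 i0).symm)).symm
    have h01 : (0 : Fin (m+2)) ≠ 1 := by simp [Fin.ext_iff]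
    set τ₀ : Equiv.Perm (Fin (m+2)) := (Equiv.swap 1 j1).trans (Equiv.swap 0 i0) with hτ₀
    have hτ₀0 : τ₀ 0 = i0 := by
      have hs : (Equiv.swap (1 : Fin (m+2)) j1) 0 = 0 :=
        Equiv.swap_apply_of_ne_of_ne h01 (Ne.symm hj1ne)
      simp [hτ₀, Equiv.trans_apply, hs, Equiv.swap_apply_left]
    have hτ₀1 : τ₀ (Fin.succ 0) = j0 := by
      rw [Fin.succ_zero_eq_one]
      simp only [hτ₀, Equiv.trans_apply, Equiv.swap_apply_left, hj1, Equiv.swap_apply_self]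
    set B : Matrix (Fin (m+2)) (Fin (m+2)) (ZMod 2) := A.submatrix τ₀ τ₀ with hBdef
    have hBsym : ∀ a b, B a b = B b a := fun a b => hsym _ _
    have hBdiag : ∀ a, B a a = 0 := fun a => hd _
    have hB01 : B 0 (Fin.succ 0) = 1 := by
      show A (τ₀ 0) (τ₀ (Fin.succ 0)) = 1
      rw [hτ₀0, hτ₀1, hA01]
    set u : Fin m → ZMod 2 := fun i => B i.succ.succ 0 with hu
    set v : Fin m → ZMod 2 := fun i => B i.succ.succ (Fin.succ 0) with hv
    set C : Matrix (Fin m) (Fin m) (ZMod 2) :=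
      fun i j => B i.succ.succ j.succ.succ + (u i * v j + v i * u j) with hC
    have hCsym : C.IsSymm := by
      ext i j
      show C j i = C i j
      simp only [hC]
      rw [hBsym]
      ring
    obtain ⟨τ', L', D', hL1, hL2, hD1, hD2, hD3, hD4, hmain⟩ := IH m (by omega) C hCsym
    have hCab : ∀ a b, (L' * D' * L'ᵀ) a b = C (τ' a) (τ' b) :=
      fun a b => (congrFun (congrFun hmain a) b).symm
    set τ₁ : Equiv.Perm (Fin (m+2)) :=
      Equiv.Perm.decomposeFin.symm (0, Equiv.Perm.decomposeFin.symm (0, τ')) with hτ₁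
    have hτ₁0 : τ₁ 0 = 0 := Equiv.Perm.decomposeFin_symm_apply_zero 0 _
    have hτ₁1 : τ₁ (Fin.succ 0) = Fin.succ 0 := by
      simp [hτ₁, Equiv.Perm.decomposeFin_symm_apply_succ,
        Equiv.Perm.decomposeFin_symm_apply_zero]
    have hτ₁ss : ∀ i, τ₁ i.succ.succ = ((τ' i).succ).succ := by
      intro i
      simp [hτ₁, Equiv.Perm.decomposeFin_symm_apply_succ]
    set L : Matrix (Fin (m+2)) (Fin (m+2)) (ZMod 2) :=
      Fin.cons (Fin.cons 1 (fun _ => 0))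
        (Fin.cons (Fin.cons 0 (Fin.cons 1 (fun _ => 0)))
          (fun i => Fin.cons (v (τ' i)) (Fin.cons (u (τ' i)) (L' i)))) with hL
    set D : Matrix (Fin (m+2)) (Fin (m+2)) (ZMod 2) :=
      Fin.cons (Fin.cons 0 (Fin.cons 1 (fun _ => 0)))
        (Fin.cons (Fin.cons 1 (fun _ => 0))
          (fun i => Fin.cons 0 (Fin.cons 0 (D' i)))) with hD
    refine ⟨τ₁.trans τ₀, L, D, ?_, ?_, ?_, ?_, ?_, ?_, ?_⟩
    · -- L diagonal
      refine fin2cases ?_ ?_ (fun i2 => ?_) <;> simp [hL, hL1]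
    · -- L lower triangular
      refine fin2cases ?_ ?_ (fun i2 => ?_) <;> refine fin2cases ?_ ?_ (fun j2 => ?_) <;>
        intro h <;> simp only [Fin.lt_def, Fin.val_succ, Fin.val_zero] at h
      · omega
      · simp [hL]
      · simp [hL]
      · omega
      · omega
      · simp [hL]
      · omega
      · omega
      · simpa [hL] using hL2 i2 j2 (by simp only [Fin.lt_def]; omega)
    · -- D adjacency
      refine fin2cases ?_ ?_ (fun i2 => ?_) <;> refine fin2cases ?_ ?_ (fun j2 => ?_) <;>
        intro h1 h2
      · exact absurd rfl h1
      · left; simp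
      · exact absurd (by simp [hD]) h2
      · right; simp
      · exact absurd rfl h1
      · exact absurd (by simp [hD]) h2
      · exact absurd (by simp [hD]) h2
      · exact absurd (by simp [hD]) h2
      · have := hD1 i2 j2 (fun h => h1 (by rw [h])) (by simpa [hD] using h2)
        simp only [Fin.val_succ]
        omega
    · -- D symmetric
      refine fin2cases ?_ ?_ (fun i2 => ?_) <;> refine fin2cases ?_ ?_ (fun j2 => ?_) <;>
        simp [hD, hD2]
    · -- 2x2 blocks antidiagonal
      refine fin2cases ?_ ?_ (fun i2 => ?_) <;> refine fin2cases ?_ ?_ (fun j2 => ?_) <;>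
        intro h1 h2 <;> simp only [Fin.val_succ, Fin.val_zero] at h1
      · omega
      · constructor <;> simp [hD]
      · omega
      · omega
      · omega
      · exact absurd h2 (by simp [hD])
      · omega
      · omega
      · have := hD3 i2 j2 (by omega) (by simpa [hD] using h2)
        constructor <;> simp [hD, this.1, this.2]
    · -- blocks don't overlap
      refine fin2cases ?_ ?_ (fun i2 => ?_) <;> refine fin2cases ?_ ?_ (fun j2 => ?_) <;>
        refine fin2cases ?_ ?_ (fun l2 => ?_) <;> intro h1 h2 h3 <;>
        simp only [Fin.val_succ, Fin.val_zero] at h1 h2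
      all_goals try omega
      · simp [hD]
      · exact absurd h3 (by simp [hD])
      · simpa [hD] using hD4 i2 j2 l2 (by omega) (by omega) (by simpa [hD] using h3)
    · -- the product identity
      ext a b
      show B (τ₁ a) (τ₁ b) = (L * D * Lᵀ) a b
      refine fin2cases (P := fun x => B (τ₁ x) (τ₁ b) = (L * D * Lᵀ) x b)
        ?_ ?_ (fun a2 => ?_) a <;>
        refine fin2cases (P := fun y => B (τ₁ _) (τ₁ y) = (L * D * Lᵀ) _ y)
          ?_ ?_ (fun b2 => ?_) b <;>
        beta_reduce <;> simp only [hτ₁0, hτ₁1, hτ₁ss]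
      · rw [hBdiag]
        simp only [Matrix.mul_apply, transpose_apply]; simp [Fin.sum_univ_succ, hL, hD]
      · rw [hB01]
        simp only [Matrix.mul_apply, transpose_apply]; simp [Fin.sum_univ_succ, hL, hD]
      · rw [hBsym]
        simp only [Matrix.mul_apply, transpose_apply]; simp [Fin.sum_univ_succ, hL, hD, hu, hv]
      · rw [hBsym, hB01]
        simp only [Matrix.mul_apply, transpose_apply]; simp [Fin.sum_univ_succ, hL, hD]
      · rw [hBdiag]
        simp only [Matrix.mul_apply, transpose_apply]; simp [Fin.sum_univ_succ, hL, hD]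
      · rw [hBsym]
        simp only [Matrix.mul_apply, transpose_apply]; simp [Fin.sum_univ_succ, hL, hD, hu, hv]
      · simp only [Matrix.mul_apply, transpose_apply]; simp [Fin.sum_univ_succ, hL, hD, hu, hv]
      · simp only [Matrix.mul_apply, transpose_apply]; simp [Fin.sum_univ_succ, hL, hD, hu, hv]
      · rw [show B ((τ' a2).succ).succ ((τ' b2).succ).succ
              = (L' * D' * L'ᵀ) a2 b2
                + (u (τ' a2) * v (τ' b2) + v (τ' a2) * u (τ' b2)) from by
            rw [hCab]; simp only [hC]; exact gf2_addcancel _ _]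
        simp only [Matrix.mul_apply, transpose_apply]; simp [Fin.sum_univ_succ, hL, hD, Finset.sum_mul]
        ring

/-- Every symmetric matrix over GF(2) admits an LDL decomposition with a permutation
matrix `P`, a unit lower-triangular `L`, and a block-diagonal `D` whose diagonal blocks
are `0`, `1`, or the 2×2 antidiagonal matrix. -/
theorem gf2_ldl_exists (n : ℕ) (A : Matrix (Fin n) (Fin n) (ZMod 2)) (hA : A.IsSymm) :
    ∃ (σ : Equiv.Perm (Fin n)) (L D : Matrix (Fin n) (Fin n) (ZMod 2)),
      -- L is unit lower-triangular
      (∀ i, L i i = 1) ∧ (∀ i j, i < j → L i j = 0) ∧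
      -- D is block-diagonal with 1×1 or 2×2 antidiagonal blocks:
      -- nonzero entries lie on the diagonal or on adjacent off-diagonal positions
      (∀ i j : Fin n, i ≠ j → D i j ≠ 0 → ((i : ℕ) + 1 = j ∨ (j : ℕ) + 1 = i)) ∧
      (∀ i j : Fin n, D i j = D j i) ∧
      -- a 2×2 block is the antidiagonal matrix [[0,1],[1,0]]
      (∀ i j : Fin n, (i : ℕ) + 1 = j → D i j = 1 → D i i = 0 ∧ D j j = 0) ∧
      -- 2×2 blocks do not overlap
      (∀ i j l : Fin n, (i : ℕ) + 1 = j → (j : ℕ) + 1 = l → D i j = 1 → D j l = 0) ∧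
      A = (σ.permMatrix (ZMod 2)) * L * D * Lᵀ * (σ.permMatrix (ZMod 2))ᵀ := by
  obtain ⟨τ, L, D, h1, h2, h3, h4, h5, h6, h7⟩ := gf2_key n A hA
  refine ⟨τ⁻¹, L, D, h1, h2, h3, h4, h5, h6, ?_⟩
  calc A = (A.submatrix τ τ).submatrix (τ⁻¹ : Equiv.Perm (Fin n)) (τ⁻¹ : Equiv.Perm (Fin n)) := by
          ext a b; simp
    _ = (L * D * Lᵀ).submatrix (τ⁻¹ : Equiv.Perm (Fin n)) (τ⁻¹ : Equiv.Perm (Fin n)) := by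
          rw [h7]
    _ = (τ⁻¹ : Equiv.Perm (Fin n)).permMatrix (ZMod 2) * (L * D * Lᵀ) *
          ((τ⁻¹ : Equiv.Perm (Fin n)).permMatrix (ZMod 2))ᵀ := (gf2_perm_conj n τ⁻¹ _).symm
    _ = _ := by simp only [mul_assoc]
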